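/- Let R be a Noetherian commutative regular local ring with maximal ideal 𝔪 and let N be a flat R-module. Then L₀N agrees with the 𝔪-adic completion of N, and L_s N = 0 for all s > 0. -/

import Mathlib

open CategoryTheory LinearMap TensorProduct

universe u

noncomputable section

variable (R : Type u) [CommRing R] (I : Ideal R)
variable (P : ChainComplex (ModuleCat.{u} R) ℕ)

/-- The map induced on `I`-adic completions by the differential `P.d s t` of a chain
complex `P`. -/
def completedD (s t : ℕ) :
    AdicCompletion I (P.X s) →ₗ[R] AdicCompletion I (P.X t) :=
  (AdicCompletion.map I ((P.d s t).hom : P.X s →ₗ[R] P.X t)).restrictScalars R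

/-- `L_s`, the `s`-th left derived functor of `I`-adic completion, computed as the
`s`-th homology of the `I`-adic completion of a projective (free) resolution `P`:
the quotient of `ker(completion of d : P_s → P_{s-1})` by the image of the completion
of `d : P_{s+1} → P_s` (for `s = 0` the outgoing differential `P.d 0 0` is zero). -/
def derivedCompletion (s : ℕ) : Type u :=
  LinearMap.ker (completedD R I P s (s - 1)) ⧸
    Submodule.comap (LinearMap.ker (completedD R I P s (s - 1))).subtype
      (LinearMap.range (completedD R I P (s + 1) s))

instance (s : ℕ) : AddCommGroup (derivedCompletion R I P s) :=
  inferInstanceAs (AddCommGroup (LinearMap.ker (completedD R I P s (s - 1)) ⧸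
    Submodule.comap (LinearMap.ker (completedD R I P s (s - 1))).subtype
      (LinearMap.range (completedD R I P (s + 1) s))))

instance (s : ℕ) : Module R (derivedCompletion R I P s) :=
  inferInstanceAs (Module R (LinearMap.ker (completedD R I P s (s - 1)) ⧸
    Submodule.comap (LinearMap.ker (completedD R I P s (s - 1))).subtype
      (LinearMap.range (completedD R I P (s + 1) s))))



section Purity

variable {R : Type u} [CommRing R]
variable {A B C : Type u} [AddCommGroup A] [Module R A] [AddCommGroup B] [Module R B]
  [AddCommGroup C] [Module R C]
variable (f : A →ₗ[R] B) (g : B →ₗ[R] C)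

/-- A short exact sequence with flat cokernel is pure: tensoring preserves injectivity
of the first map. -/
theorem pure_of_flat_quot [Module.Flat R C]
    (hf : Function.Injective f) (hfg : Function.Exact f g) (hg : Function.Surjective g)
    (X : Type u) [AddCommGroup X] [Module R X] :
    Function.Injective (f.lTensor X) := by
  let p : (X →₀ R) →ₗ[R] X := Finsupp.linearCombination R (id : X → X)
  have hp : Function.Surjective p := fun x =>
    ⟨Finsupp.single x 1, by simp [p]⟩
  exact lTensor_injective_of_exact_of_exact_of_rTensor_injective (M₁ := LinearMap.ker p)
    (LinearMap.exact_subtype_ker_map p) hp hfg hg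
    (Module.Flat.rTensor_preserves_injective_linearMap _ (LinearMap.ker p).injective_subtype)
    (Module.Flat.lTensor_preserves_injective_linearMap (M := X →₀ R) f hf)

theorem pure_of_flat_quot_rTensor [Module.Flat R C]
    (hf : Function.Injective f) (hfg : Function.Exact f g) (hg : Function.Surjective g)
    (X : Type u) [AddCommGroup X] [Module R X] :
    Function.Injective (f.rTensor X) :=
  (LinearMap.lTensor_inj_iff_rTensor_inj X f).mp (pure_of_flat_quot f g hf hfg hg X)

/-- In a short exact sequence with flat cokernel, `J • ⊤ ⊓ range f = J • range f`. -/
theorem inf_range_of_flat_quot [Module.Flat R C]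
    (hf : Function.Injective f) (hfg : Function.Exact f g) (hg : Function.Surjective g)
    (J : Ideal R) :
    (J • ⊤ : Submodule R B) ⊓ LinearMap.range f = J • LinearMap.range f := by
  apply le_antisymm
  · rintro x ⟨hx1, a, rfl⟩
    have h1 : ((Ideal.Quotient.mk J 1) ⊗ₜ[R] f a : (R ⧸ J) ⊗[R] B) = 0 := by
      apply (quotTensorEquivQuotSMul B J).injective
      rw [quotTensorEquivQuotSMul_mk_tmul, one_smul, map_zero, Submodule.Quotient.mk_eq_zero]
      exact hx1
    have h2 : ((Ideal.Quotient.mk J 1) ⊗ₜ[R] a : (R ⧸ J) ⊗[R] A) = 0 := by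
      apply pure_of_flat_quot f g hf hfg hg (R ⧸ J)
      simpa using h1
    have h3 : a ∈ (J • ⊤ : Submodule R A) := by
      have h4 := congrArg (quotTensorEquivQuotSMul A J) h2
      rw [map_zero, quotTensorEquivQuotSMul_mk_tmul, one_smul,
        Submodule.Quotient.mk_eq_zero] at h4
      exact h4
    have : f a ∈ Submodule.map f (J • ⊤ : Submodule R A) := Submodule.mem_map_of_mem h3
    rwa [Submodule.map_smul'', Submodule.map_top] at this
  · exact le_inf (Submodule.smul_mono le_rfl le_top) (Submodule.smul_le_right)

/-- The kernel of a surjection of flat modules is flat. -/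
theorem flat_of_exact [Module.Flat R B] [Module.Flat R C]
    (hf : Function.Injective f) (hfg : Function.Exact f g) (hg : Function.Surjective g) :
    Module.Flat R A := by
  rw [Module.Flat.iff_lTensor_injective']
  intro J
  have h1 : Function.Injective (f.rTensor (J : Type u)) :=
    pure_of_flat_quot_rTensor f g hf hfg hg J
  have h2 : Function.Injective (LinearMap.lTensor B J.subtype) :=
    (Module.Flat.iff_lTensor_injective' (R := R) (M := B)).mp inferInstance J
  have h3 : Function.Injective (⇑(f.rTensor R) ∘ ⇑(LinearMap.lTensor A J.subtype)) := by
    rw [← LinearMap.coe_comp, LinearMap.rTensor_comp_lTensor, ← LinearMap.lTensor_comp_rTensor,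
      LinearMap.coe_comp]
    exact h2.comp h1
  exact h3.of_comp

end Purity

section AdicExact

namespace AdicCompletionAux

open AdicCompletion Submodule

variable {R : Type u} [CommRing R] {I : Ideal R}
variable {M : Type u} [AddCommGroup M] [Module R M]
variable {N : Type u} [AddCommGroup N] [Module R N]
variable {P : Type u} [AddCommGroup P] [Module R P]

variable (I) in
/-- Adic completion preserves injectivity, given an Artin-Rees style hypothesis. -/
theorem map_injective' {f : M →ₗ[R] N} (hf : Function.Injective f)
    (k : ℕ)
    (hk : ∀ n ≥ k, (I ^ n • ⊤ : Submodule R N) ⊓ range f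
      = I ^ (n - k) • ((I ^ k • ⊤ : Submodule R N) ⊓ range f)) :
    Function.Injective (AdicCompletion.map I f) := by
  rw [← LinearMap.ker_eq_bot, LinearMap.ker_eq_bot']
  intro x
  apply AdicCompletion.induction_on I M x (fun a ↦ ?_)
  intro hx
  refine AdicCompletion.mk_zero_of _ _ _ ⟨42, fun n _ ↦ ⟨n + k, by omega, n, by omega, ?_⟩⟩
  rw [← Submodule.comap_map_eq_of_injective hf (I ^ n • ⊤ : Submodule R M),
    Submodule.map_smul'', Submodule.map_top]
  apply (smul_mono_right _ inf_le_right : I ^ n • (I ^ k • ⊤ ⊓ range f) ≤ _)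
  nth_rw 1 [show n = n + k - k by omega]
  rw [← hk (n + k) (show n + k ≥ k by omega)]
  exact ⟨by simpa using congrArg (fun x ↦ x.val (n + k)) hx, ⟨a (n + k), rfl⟩⟩

variable {f : M →ₗ[R] N} {g : N →ₗ[R] P} (hf : Function.Injective f)
  (hfg : Function.Exact f g) (hg : Function.Surjective g)

section

variable {k : ℕ}
  (hkn : ∀ n ≥ k, (I ^ n • ⊤ : Submodule R N) ⊓ LinearMap.range f
    = I ^ (n - k) • ((I ^ k • ⊤ : Submodule R N) ⊓ LinearMap.range f))
  (x : AdicCauchySequence I N) (hker : ∀ (n : ℕ), g (x n) ∈ (I ^ n • ⊤ : Submodule R P))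

private noncomputable def mapExactAuxDelta {n : ℕ} {d : N}
    (hdmem : d ∈ (I ^ (k + n + 1) • ⊤ : Submodule R N)) {y yₙ : M}
    (hd : f y = x (k + n + 1) - d) (hyₙ : f yₙ - x (k + n) ∈ (I ^ (k + n) • ⊤ : Submodule R N)) :
    { d : (I ^ n • ⊤ : Submodule R M)
      | f (yₙ + d) - x (k + n + 1) ∈ (I ^ (k + n + 1) • ⊤ : Submodule R N) } :=
  have h : f (y - yₙ) ∈ (I ^ (k + n) • ⊤ : Submodule R N) := by
    simp only [map_sub, hd]
    convert_to x (k + n + 1) - x (k + n) - d - (f yₙ - x (k + n)) ∈ I ^ (k + n) • ⊤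
    · abel
    · refine Submodule.sub_mem _ (Submodule.sub_mem _ ?_ ?_) hyₙ
      · rw [← Submodule.Quotient.eq]
        exact AdicCauchySequence.mk_eq_mk (by omega) _
      · exact (Submodule.smul_mono_left (Ideal.pow_le_pow_right (by omega))) hdmem
  have hincl : I ^ (k + n - k) • (I ^ k • ⊤ ⊓ range f) ≤ I ^ (k + n - k) • (range f) :=
    smul_mono_right _ inf_le_right
  have hyyₙ : y - yₙ ∈ (I ^ n • ⊤ : Submodule R M) := by
    convert_to y - yₙ ∈ (I ^ (k + n - k) • ⊤ : Submodule R M)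
    · simp
    · rw [← Submodule.comap_map_eq_of_injective hf (I ^ (k + n - k) • ⊤ : Submodule R M),
        Submodule.map_smul'', Submodule.map_top]
      apply hincl
      rw [← hkn (k + n) (by omega)]
      exact ⟨h, ⟨y - yₙ, rfl⟩⟩
  ⟨⟨y - yₙ, hyyₙ⟩, by simpa [hd, Nat.succ_eq_add_one, Nat.add_assoc]⟩

include hfg in
private noncomputable def mapExactAux :
    (n : ℕ) → { a : M | f a - x (k + n) ∈ (I ^ (k + n) • ⊤ : Submodule R N) }
  | .zero =>
      let d := (h2 0).choose
      let y := (h2 0).choose_spec.choose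
      have hdy : f y = x (k + 0) - d := (h2 0).choose_spec.choose_spec.right
      have hdmem := (h2 0).choose_spec.choose_spec.left
      ⟨y, by simpa [hdy]⟩
  | .succ n =>
      let d := (h2 <| n + 1).choose
      let y := (h2 <| n + 1).choose_spec.choose
      have hdy : f y = x (k + (n + 1)) - d := (h2 <| n + 1).choose_spec.choose_spec.right
      have hdmem := (h2 <| n + 1).choose_spec.choose_spec.left
      let ⟨yₙ, (hyₙ : f yₙ - x (k + n) ∈ (I ^ (k + n) • ⊤ : Submodule R N))⟩ :=
        mapExactAux n
      let ⟨d, hd⟩ := mapExactAuxDelta hf hkn x hdmem hdy hyₙ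
      ⟨yₙ + d, hd⟩
 where
  h1 (n : ℕ) : g (x (k + n)) ∈ Submodule.map g (I ^ (k + n) • ⊤ : Submodule R N) := by
    rw [map_smul'', Submodule.map_top, range_eq_top.mpr hg]
    exact hker (k + n)
  h2 (n : ℕ) : ∃ (d : N) (y : M),
      d ∈ (I ^ (k + n) • ⊤ : Submodule R N) ∧ f y = x (k + n) - d := by
    obtain ⟨d, hdmem, hd⟩ := h1 n
    obtain ⟨y, hdy⟩ := (hfg (x (k + n) - d)).mp (by simp [hd])
    exact ⟨d, y, hdmem, hdy⟩

end

include hf hfg hg in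
/-- `AdicCompletion` is exact, given an Artin-Rees style hypothesis. -/
theorem map_exact' (k : ℕ)
    (hk : ∀ n ≥ k, (I ^ n • ⊤ : Submodule R N) ⊓ LinearMap.range f
      = I ^ (n - k) • ((I ^ k • ⊤ : Submodule R N) ⊓ LinearMap.range f)) :
    Function.Exact (AdicCompletion.map I f) (AdicCompletion.map I g) := by
  refine LinearMap.exact_of_comp_eq_zero_of_ker_le_range ?_ (fun y ↦ ?_)
  · rw [AdicCompletion.map_comp, hfg.linearMap_comp_eq_zero, AdicCompletion.map_zero]
  · apply AdicCompletion.induction_on I N y (fun b ↦ ?_)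
    intro hz
    have hb (n : ℕ) : g (b n) ∈ (I ^ n • ⊤ : Submodule R P) := by
      simpa using congrArg (fun x ↦ x.val n) hz
    let a := mapExactAux hf hfg hg hk b hb
    refine ⟨AdicCompletion.mk I M (AdicCauchySequence.mk I M (fun n ↦ (a n : M)) ?_), ?_⟩
    · refine fun n ↦ SModEq.symm ?_
      simp [a, mapExactAux, SModEq]
    · ext n
      suffices h : Submodule.Quotient.mk (p := (I ^ n • ⊤ : Submodule R N)) (f (a n)) =
            Submodule.Quotient.mk (p := (I ^ n • ⊤ : Submodule R N)) (b (k + n)) by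
        simp [h, AdicCauchySequence.mk_eq_mk (show n ≤ k + n by omega)]
      rw [Submodule.Quotient.eq]
      have hle : (I ^ (k + n) • ⊤ : Submodule R N) ≤ (I ^ n • ⊤ : Submodule R N) :=
        Submodule.smul_mono_left (Ideal.pow_le_pow_right (by omega))
      exact hle ((a n).property)

end AdicCompletionAux

end AdicExact

section Master

variable {R : Type u} [CommRing R] (I : Ideal R)
variable {A B C : Type u} [AddCommGroup A] [Module R A] [AddCommGroup B] [Module R B]
  [AddCommGroup C] [Module R C]

theorem adicFacts [Module.Flat R C] (f : A →ₗ[R] B) (g : B →ₗ[R] C)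
    (hf : Function.Injective f) (hfg : Function.Exact f g) (hg : Function.Surjective g) :
    Function.Injective (AdicCompletion.map I f) ∧
      Function.Exact (AdicCompletion.map I f) (AdicCompletion.map I g) ∧
      Function.Surjective (AdicCompletion.map I g) := by
  have hAR : ∀ n ≥ 0, (I ^ n • ⊤ : Submodule R B) ⊓ LinearMap.range f
      = I ^ (n - 0) • ((I ^ 0 • ⊤ : Submodule R B) ⊓ LinearMap.range f) := by
    intro n _
    rw [inf_range_of_flat_quot f g hf hfg hg (I ^ n)]
    simp [Ideal.one_eq_top, Submodule.top_smul, top_inf_eq]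
  exact ⟨AdicCompletionAux.map_injective' I hf 0 hAR,
    AdicCompletionAux.map_exact' hf hfg hg 0 hAR,
    AdicCompletion.map_surjective I hg⟩

end Master

/-- Let `R` be a Noetherian commutative regular local ring with maximal ideal `𝔪`
(regularity: `𝔪` is generated by a regular sequence `u₁, …, uₙ`) and let `N` be a flat
`R`-module. Then `L₀N` agrees with the `𝔪`-adic completion of `N`, and `L_s N = 0` for
all `s > 0`, where `L_s` is the `s`-th left derived functor of `𝔪`-adic completion,
computed from a free resolution `P_• → N`. -/
theorem derivedCompletion_of_flat
    [IsNoetherianRing R] [IsLocalRing R]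
    (n : ℕ) (u : Fin n → R)
    (hspan : Ideal.span (Set.range u) = IsLocalRing.maximalIdeal R)
    (hreg : RingTheory.Sequence.IsRegular R (List.ofFn u))
    (N : Type u) [AddCommGroup N] [Module R N] [Module.Flat R N]
    (hfree : ∀ k, Module.Free R (P.X k))
    (π : P.X 0 ⟶ ModuleCat.of R N) (hπ : Function.Surjective π)
    (hexact0 : Function.Exact (P.d 1 0) π)
    (hexact : ∀ k, Function.Exact (P.d (k + 2) (k + 1)) (P.d (k + 1) k)) :
    Nonempty (derivedCompletion R (IsLocalRing.maximalIdeal R) P 0 ≃ₗ[R]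
        AdicCompletion (IsLocalRing.maximalIdeal R) N) ∧
      ∀ s : ℕ, 0 < s →
        Subsingleton (derivedCompletion R (IsLocalRing.maximalIdeal R) P s) := by
  classical
  set I := IsLocalRing.maximalIdeal R with hI
  have flatP : ∀ k, Module.Flat R (P.X k) := fun k => letI := hfree k; inferInstance
  let π' : P.X 0 →ₗ[R] N := π.hom
  have hπ' : Function.Surjective π' := hπ
  -- syzygies
  let Z : ∀ k : ℕ, Submodule R (P.X k) := fun k =>
    match k with
    | 0 => LinearMap.ker π'
    | (k + 1) => LinearMap.ker ((P.d (k + 1) k).hom : P.X (k + 1) →ₗ[R] P.X k)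
  have hrange : ∀ k, LinearMap.range ((P.d (k + 1) k).hom : P.X (k + 1) →ₗ[R] P.X k) = Z k := by
    intro k
    match k with
    | 0 => exact (LinearMap.exact_iff.mp hexact0).symm
    | (k + 1) => exact (LinearMap.exact_iff.mp (hexact k)).symm
  let q : ∀ k : ℕ, (P.X (k + 1) →ₗ[R] Z k) := fun k =>
    LinearMap.codRestrict (Z k) (P.d (k + 1) k).hom
      (fun x => by rw [← hrange k]; exact LinearMap.mem_range_self _ x)
  have hq_surj : ∀ k, Function.Surjective (q k) := by
    intro k z
    obtain ⟨x, hx⟩ : (z : P.X k) ∈ LinearMap.range ((P.d (k + 1) k).hom : P.X (k + 1) →ₗ[R] P.X k) := by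
      rw [hrange k]; exact z.2
    exact ⟨x, Subtype.ext hx⟩
  have hker_q : ∀ k, LinearMap.ker (q k) = Z (k + 1) := fun k =>
    LinearMap.ker_codRestrict _ _ _
  have hq_exact : ∀ k, Function.Exact ((Z (k + 1)).subtype) (q k) := by
    intro k
    have h := LinearMap.exact_subtype_ker_map (q k)
    rwa [hker_q k] at h
  have hexactπ : Function.Exact ((Z 0).subtype) π' := LinearMap.exact_subtype_ker_map π'
  have flatZ : ∀ k, Module.Flat R (Z k) := by
    intro k
    induction k with
    | zero =>
      haveI := flatP 0
      exact flat_of_exact (Z 0).subtype π' (Submodule.injective_subtype _) hexactπ hπ'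
    | succ k ih =>
      haveI := flatP (k + 1)
      haveI := ih
      exact flat_of_exact (Z (k + 1)).subtype (q k) (Submodule.injective_subtype _)
        (hq_exact k) (hq_surj k)
  obtain ⟨injι0, exactπc, surjπc⟩ :=
    adicFacts I (Z 0).subtype π' (Submodule.injective_subtype _) hexactπ hπ'
  have factk : ∀ k, Function.Injective (AdicCompletion.map I (Z (k + 1)).subtype) ∧
      Function.Exact (AdicCompletion.map I (Z (k + 1)).subtype) (AdicCompletion.map I (q k)) ∧
      Function.Surjective (AdicCompletion.map I (q k)) := fun k => by
    haveI := flatZ k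
    exact adicFacts I _ _ (Submodule.injective_subtype _) (hq_exact k) (hq_surj k)
  have injι : ∀ k, Function.Injective (AdicCompletion.map I (Z k).subtype) := fun k =>
    match k with
    | 0 => injι0
    | (k + 1) => (factk k).1
  have hd_comp : ∀ k, ((P.d (k + 1) k).hom : P.X (k + 1) →ₗ[R] P.X k) = (Z k).subtype ∘ₗ q k :=
    fun k => (LinearMap.subtype_comp_codRestrict _ _ _).symm
  have hmap_d : ∀ k, AdicCompletion.map I ((P.d (k + 1) k).hom : P.X (k + 1) →ₗ[R] P.X k) =
      (AdicCompletion.map I (Z k).subtype) ∘ₗ (AdicCompletion.map I (q k)) := by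
    intro k
    rw [hd_comp k, AdicCompletion.map_comp]
  have hker_d : ∀ k (x : AdicCompletion I (P.X (k + 1))),
      AdicCompletion.map I ((P.d (k + 1) k).hom : P.X (k + 1) →ₗ[R] P.X k) x = 0 ↔
        x ∈ Set.range (AdicCompletion.map I (Z (k + 1)).subtype) := by
    intro k x
    rw [hmap_d k]
    constructor
    · intro h
      refine ((factk k).2.1 x).mp (injι k ?_)
      simpa using h
    · intro h
      have h0 := ((factk k).2.1 x).mpr h
      simp [LinearMap.comp_apply, h0]
  have hran_d : ∀ k, Set.range (AdicCompletion.map I ((P.d (k + 1) k).hom : P.X (k + 1) →ₗ[R] P.X k)) =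
      Set.range (AdicCompletion.map I (Z k).subtype) := by
    intro k
    rw [hmap_d k, LinearMap.coe_comp, Set.range_comp,
      Set.range_eq_univ.mpr (factk k).2.2, Set.image_univ]
  constructor
  · -- degree 0
    have hd00 : ((P.d 0 0).hom : P.X 0 →ₗ[R] P.X 0) = 0 := by rw [P.shape 0 0 (by simp)]; rfl
    have hker_top : ∀ x : AdicCompletion I (P.X 0), completedD R I P 0 (0 - 1) x = 0 := by
      intro x
      show AdicCompletion.map I ((P.d 0 0).hom : P.X 0 →ₗ[R] P.X 0) x = 0
      rw [hd00, AdicCompletion.map_zero]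
      rfl
    let φ : LinearMap.ker (completedD R I P 0 (0 - 1)) →ₗ[R] AdicCompletion I N :=
      ((AdicCompletion.map I π').restrictScalars R) ∘ₗ
        (LinearMap.ker (completedD R I P 0 (0 - 1))).subtype
    have hφsurj : Function.Surjective φ := by
      intro y
      obtain ⟨x, hx⟩ := surjπc y
      exact ⟨⟨x, LinearMap.mem_ker.mpr (hker_top x)⟩, hx⟩
    have hφker : LinearMap.ker φ =
        Submodule.comap (LinearMap.ker (completedD R I P 0 (0 - 1))).subtype
          (LinearMap.range (completedD R I P (0 + 1) 0)) := by
      ext ⟨x, hx⟩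
      show AdicCompletion.map I π' x = 0 ↔ _
      rw [exactπc x]
      rw [← hran_d 0]
      constructor
      · rintro ⟨y, hy⟩
        exact Submodule.mem_comap.mpr ⟨y, show completedD R I P (0 + 1) 0 y = x from hy⟩
      · intro h
        obtain ⟨y, hy⟩ := Submodule.mem_comap.mp h
        exact ⟨y, hy⟩
    have e := φ.quotKerEquivOfSurjective hφsurj
    rw [hφker] at e
    exact ⟨e⟩
  · -- positive degrees
    intro s hs
    obtain ⟨k, rfl⟩ : ∃ k, s = k + 1 := ⟨s - 1, by omega⟩
    have htop : Submodule.comap (LinearMap.ker (completedD R I P (k + 1) (k + 1 - 1))).subtype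
        (LinearMap.range (completedD R I P (k + 1 + 1) (k + 1))) = ⊤ := by
      rw [Submodule.eq_top_iff']
      rintro ⟨x, hx⟩
      have hx' : completedD R I P (k + 1) (k + 1 - 1) x = 0 := hx
      have hx0 : AdicCompletion.map I ((P.d (k + 1) k).hom : P.X (k + 1) →ₗ[R] P.X k) x = 0 := hx'

      have hmem := (hker_d k x).mp hx0
      rw [← hran_d (k + 1)] at hmem
      obtain ⟨y, hy⟩ := hmem
      exact Submodule.mem_comap.mpr ⟨y, show completedD R I P (k + 1 + 1) (k + 1) y = x from hy⟩
    exact Submodule.Quotient.subsingleton_iff.mpr htop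


end
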